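/- Suppose the multilevel rates hold with h_ℓ = M^{−ℓ} for M ≥ 2: V_ℓ ≤ C h_ℓ^β, cost C_ℓ ≤ C h_ℓ^{−ζ}, bias |η_L(φ) − η_∞(φ)| ≤ C h_L^α, with β > ζ and max{β,ζ} ≤ 2α. Then for any ε > 0 there exist L and sample sizes N_ℓ ∝ ε^{−2} h_ℓ^{(β+ζ)/2} such that the total cost ∑_{ℓ=0}^L N_ℓ C_ℓ is O(ε^{−2}) while ∑_{ℓ=0}^L V_ℓ/N_ℓ = O(ε²) and the squared bias is O(ε²). -/

import Mathlib

open Finset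

/-- multilevel complexity in the regime `β > ζ`.
With `h_ℓ = M^{−ℓ}` (`M ≥ 2`), variance rate `V_ℓ ≤ C h_ℓ^β`, cost `C_ℓ ≤ C h_ℓ^{−ζ}`,
bias `|bias_L| ≤ C h_L^α`, with `β > ζ` and `max{β, ζ} ≤ 2α`: for any `0 < ε ≤ 1`
there exist `L` and sample sizes `N_ℓ ∝ ε^{−2} h_ℓ^{(β+ζ)/2}` such that the total
cost `∑ N_ℓ C_ℓ` is `O(ε^{−2})`, while `∑ V_ℓ / N_ℓ = O(ε²)` and the squared bias
is `O(ε²)`. -/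
theorem mlmc_complexity
    (Cc α β ζ : ℝ) (M : ℕ) (hM : 2 ≤ M)
    (hCc : 0 < Cc) (hα : 0 < α) (hζ : 0 < ζ) (hβζ : ζ < β)
    (h2α : max β ζ ≤ 2 * α)
    (V Cost bias : ℕ → ℝ)
    (hVnonneg : ∀ ℓ, 0 ≤ V ℓ)
    (hV : ∀ ℓ : ℕ, V ℓ ≤ Cc * ((M : ℝ) ^ (-(ℓ : ℝ))) ^ β)
    (hCostpos : ∀ ℓ, 0 < Cost ℓ)
    (hCost : ∀ ℓ : ℕ, Cost ℓ ≤ Cc * ((M : ℝ) ^ (-(ℓ : ℝ))) ^ (-ζ))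
    (hbias : ∀ L : ℕ, |bias L| ≤ Cc * ((M : ℝ) ^ (-(L : ℝ))) ^ α) :
    ∃ C' : ℝ, 0 < C' ∧ ∀ ε : ℝ, 0 < ε → ε ≤ 1 →
      ∃ (L : ℕ) (N : ℕ → ℕ),
        (∀ ℓ ≤ L, 1 ≤ N ℓ ∧
          (N ℓ : ℝ) ≤ C' * (ε ^ (-2 : ℝ) * ((M : ℝ) ^ (-(ℓ : ℝ))) ^ ((β + ζ) / 2) + 1)) ∧
        (∑ ℓ ∈ range (L + 1), (N ℓ : ℝ) * Cost ℓ ≤ C' * ε ^ (-2 : ℝ)) ∧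
        (∑ ℓ ∈ range (L + 1), V ℓ / (N ℓ : ℝ) ≤ C' * ε ^ 2) ∧
        bias L ^ 2 ≤ C' * ε ^ 2 := by
  have hβ : 0 < β := hζ.trans hβζ
  have hM0 : (0 : ℝ) < M := by positivity
  have hM1 : (1 : ℝ) < M := by
    have : (2 : ℝ) ≤ M := by exact_mod_cast hM
    linarith
  -- conversion between the two power forms
  have hconv : ∀ (ℓ : ℕ) (c : ℝ),
      ((M : ℝ) ^ (-(ℓ : ℝ))) ^ c = ((M : ℝ) ^ (-c)) ^ ℓ := by
    intro ℓ c
    rw [← Real.rpow_natCast ((M : ℝ) ^ (-c)) ℓ, ← Real.rpow_mul hM0.le,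
      ← Real.rpow_mul hM0.le]
    congr 1
    ring
  set r : ℝ := (M : ℝ) ^ (-((β - ζ) / 2)) with hr_def
  set s : ℝ := (M : ℝ) ^ ζ with hs_def
  set q : ℝ := (M : ℝ) ^ (-((β + ζ) / 2)) with hq_def
  have hr0 : 0 < r := Real.rpow_pos_of_pos hM0 _
  have hr1 : r < 1 := Real.rpow_lt_one_of_one_lt_of_neg hM1 (by linarith)
  have hs1 : 1 < s := by
    rw [hs_def]
    exact (Real.one_lt_rpow_iff_of_pos hM0).2 (Or.inl ⟨hM1, hζ⟩)
  have hq0 : 0 < q := Real.rpow_pos_of_pos hM0 _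
  have hqr : (M : ℝ) ^ (-β) = q * r := by
    rw [hq_def, hr_def, ← Real.rpow_add hM0]
    congr 1
    ring
  have hqs : q * s = r := by
    rw [hq_def, hr_def, hs_def, ← Real.rpow_add hM0]
    congr 1
    ring
  set K : ℝ := (1 - r)⁻¹ with hK_def
  have hK0 : 0 < K := by
    rw [hK_def]; exact inv_pos.2 (by linarith)
  have hgeom : ∀ n : ℕ, ∑ ℓ ∈ range n, r ^ ℓ ≤ K := by
    intro n
    rw [geom_sum_eq hr1.ne n, hK_def]
    rw [div_eq_mul_inv, show (r ^ n - 1) * (r - 1)⁻¹ = (1 - r ^ n) * (1 - r)⁻¹ by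
      rw [show (1 - r ^ n) = -(r ^ n - 1) by ring, show (1 - r) = -(r - 1) by ring,
        inv_neg, neg_mul_neg]]
    have h1 : 1 - r ^ n ≤ 1 := by
      have := pow_nonneg hr0.le n; linarith
    calc (1 - r ^ n) * (1 - r)⁻¹ ≤ 1 * (1 - r)⁻¹ :=
          mul_le_mul_of_nonneg_right h1 (by positivity)
      _ = (1 - r)⁻¹ := one_mul _
  have hgeom2 : ∀ n : ℕ, ∑ ℓ ∈ range n, s ^ ℓ ≤ s ^ n / (s - 1) := by
    intro n
    rw [geom_sum_eq hs1.ne' n]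
    have h0 : (0:ℝ) < s - 1 := by linarith
    exact div_le_div₀ (by positivity) (by linarith) h0 le_rfl
  -- the constant
  set C' : ℝ := Cc * (K + s ^ 2 / (s - 1)) + Cc * K + Cc ^ 2 + 1 with hC'_def
  have hsK : 0 < s ^ 2 / (s - 1) := div_pos (by positivity) (by linarith)
  have hC'1 : 1 ≤ C' := by
    have h1 : 0 < Cc * (K + s ^ 2 / (s - 1)) := by positivity
    have h2 : 0 < Cc * K := by positivity
    have h3 : 0 < Cc ^ 2 := by positivity
    rw [hC'_def]; linarith
  refine ⟨C', by linarith, ?_⟩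
  intro ε hε hε1
  set e : ℝ := ε ^ (-2 : ℝ) with he_def
  have he0 : 0 < e := Real.rpow_pos_of_pos hε _
  have heinv : e⁻¹ = ε ^ 2 := by
    rw [he_def, Real.rpow_neg hε.le, inv_inv,
      show (2:ℝ) = ((2:ℕ):ℝ) by norm_num, Real.rpow_natCast]
  -- choice of L
  set y : ℝ := ε ^ (-α⁻¹ : ℝ) with hy_def
  have hy0 : 0 < y := Real.rpow_pos_of_pos hε _
  have hy1 : 1 ≤ y :=
    Real.one_le_rpow_of_pos_of_le_one_of_nonpos hε hε1 (neg_nonpos_of_nonneg (by positivity))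
  set L : ℕ := ⌈Real.logb M y⌉₊ with hL_def
  have hlogb0 : 0 ≤ Real.logb M y := Real.logb_nonneg hM1 hy1
  have hL1 : y ≤ (M : ℝ) ^ (L : ℝ) := by
    calc y = (M : ℝ) ^ Real.logb M y := (Real.rpow_logb hM0 hM1.ne' hy0).symm
      _ ≤ (M : ℝ) ^ (L : ℝ) :=
          Real.rpow_le_rpow_of_exponent_le hM1.le (Nat.le_ceil _)
  have hL2 : (M : ℝ) ^ (L : ℝ) ≤ M * y := by
    calc (M : ℝ) ^ (L : ℝ) ≤ (M : ℝ) ^ (Real.logb M y + 1) :=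
          Real.rpow_le_rpow_of_exponent_le hM1.le (by
            have := Nat.ceil_lt_add_one hlogb0
            rw [hL_def]; linarith)
      _ = M * y := by
          rw [Real.rpow_add hM0, Real.rpow_one, Real.rpow_logb hM0 hM1.ne' hy0, mul_comm]
  -- the sample sizes
  set x : ℕ → ℝ := fun ℓ => e * q ^ ℓ with hx_def
  have hx0 : ∀ ℓ, 0 < x ℓ := fun ℓ => by
    simp only [hx_def]; positivity
  set N : ℕ → ℕ := fun ℓ => ⌈x ℓ⌉₊ with hN_def
  have hN1 : ∀ ℓ, 1 ≤ N ℓ := fun ℓ => Nat.one_le_ceil_iff.2 (hx0 ℓ)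
  have hNub : ∀ ℓ, (N ℓ : ℝ) ≤ x ℓ + 1 := fun ℓ => (Nat.ceil_lt_add_one (hx0 ℓ).le).le
  have hNlb : ∀ ℓ, x ℓ ≤ (N ℓ : ℝ) := fun ℓ => Nat.le_ceil _
  refine ⟨L, N, ?_, ?_, ?_, ?_⟩
  · -- sample size bounds
    intro ℓ _
    refine ⟨hN1 ℓ, ?_⟩
    rw [hconv ℓ ((β + ζ) / 2), ← hq_def]
    calc (N ℓ : ℝ) ≤ x ℓ + 1 := hNub ℓ
      _ = 1 * (e * q ^ ℓ + 1) := by rw [hx_def]; ring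
      _ ≤ C' * (e * q ^ ℓ + 1) := by
          apply mul_le_mul_of_nonneg_right hC'1
          have := hx0 ℓ
          rw [hx_def] at this
          simp only at this
          linarith
  · -- cost bound
    have hsL : s ^ L ≤ s * e := by
      have h1 : s ^ L = ((M : ℝ) ^ (L : ℝ)) ^ ζ := by
        rw [hs_def, ← Real.rpow_natCast ((M : ℝ) ^ ζ) L, ← Real.rpow_mul hM0.le,
          ← Real.rpow_mul hM0.le, mul_comm]
      have h2 : ((M : ℝ) ^ (L : ℝ)) ^ ζ ≤ (M * y) ^ ζ :=
        Real.rpow_le_rpow (Real.rpow_pos_of_pos hM0 _).le hL2 hζ.le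
      have h3 : (M * y) ^ ζ = s * y ^ ζ := by
        rw [Real.mul_rpow hM0.le hy0.le, hs_def]
      have h4 : y ^ ζ ≤ e := by
        rw [hy_def, he_def, ← Real.rpow_mul hε.le]
        apply Real.rpow_le_rpow_of_exponent_ge hε hε1
        have hζ2α : ζ ≤ 2 * α := le_trans (le_max_right β ζ) h2α
        have hαi : 0 < α⁻¹ := by positivity
        have h5 : ζ * α⁻¹ ≤ 2 := by
          calc ζ * α⁻¹ ≤ 2 * α * α⁻¹ := mul_le_mul_of_nonneg_right hζ2α hαi.le
            _ = 2 := by field_simp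
        have h6 : -α⁻¹ * ζ = -(ζ * α⁻¹) := by ring
        linarith
      calc s ^ L = ((M : ℝ) ^ (L : ℝ)) ^ ζ := h1
        _ ≤ (M * y) ^ ζ := h2
        _ = s * y ^ ζ := h3
        _ ≤ s * e := mul_le_mul_of_nonneg_left h4 (by linarith)
    have hs0 : (0:ℝ) < s := by linarith
    have hs10 : (0:ℝ) < s - 1 := by linarith
    calc ∑ ℓ ∈ range (L + 1), (N ℓ : ℝ) * Cost ℓ
        ≤ ∑ ℓ ∈ range (L + 1), (x ℓ + 1) * (Cc * s ^ ℓ) := by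
          apply Finset.sum_le_sum
          intro ℓ _
          apply mul_le_mul (hNub ℓ) _ (hCostpos ℓ).le
          · have := hx0 ℓ; linarith
          · calc Cost ℓ ≤ Cc * ((M : ℝ) ^ (-(ℓ : ℝ))) ^ (-ζ) := hCost ℓ
              _ = Cc * s ^ ℓ := by rw [hconv ℓ (-ζ), neg_neg, ← hs_def]
      _ = ∑ ℓ ∈ range (L + 1), (Cc * e * r ^ ℓ + Cc * s ^ ℓ) := by
          apply Finset.sum_congr rfl
          intro ℓ _
          have hqsl : q ^ ℓ * s ^ ℓ = r ^ ℓ := by rw [← mul_pow, hqs]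
          simp only [hx_def]
          rw [← hqsl]
          ring
      _ = Cc * e * ∑ ℓ ∈ range (L + 1), r ^ ℓ + Cc * ∑ ℓ ∈ range (L + 1), s ^ ℓ := by
          rw [Finset.sum_add_distrib, ← Finset.mul_sum, ← Finset.mul_sum]
      _ ≤ Cc * e * K + Cc * (s ^ (L + 1) / (s - 1)) :=
          add_le_add (mul_le_mul_of_nonneg_left (hgeom _) (by positivity))
            (mul_le_mul_of_nonneg_left (hgeom2 _) hCc.le)
      _ ≤ Cc * e * K + Cc * (s ^ 2 / (s - 1) * e) := by
          have hnum : s ^ (L + 1) ≤ s ^ 2 * e := by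
            rw [pow_succ]
            nlinarith [hsL, hs1, he0]
          have hdiv : s ^ (L + 1) / (s - 1) ≤ s ^ 2 * e / (s - 1) :=
            div_le_div₀ (by positivity) hnum hs10 le_rfl
          have heq : s ^ 2 * e / (s - 1) = s ^ 2 / (s - 1) * e := by ring
          rw [heq] at hdiv
          exact add_le_add_right (mul_le_mul_of_nonneg_left hdiv hCc.le) _
      _ = Cc * (K + s ^ 2 / (s - 1)) * e := by ring
      _ ≤ C' * e := by
          apply mul_le_mul_of_nonneg_right _ he0.le
          have h2 : 0 < Cc * K := by positivity
          have h3 : 0 < Cc ^ 2 := by positivity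
          rw [hC'_def]; linarith
  · -- variance bound
    calc ∑ ℓ ∈ range (L + 1), V ℓ / (N ℓ : ℝ)
        ≤ ∑ ℓ ∈ range (L + 1), Cc * ε ^ 2 * r ^ ℓ := by
          apply Finset.sum_le_sum
          intro ℓ _
          have hVl : V ℓ ≤ Cc * (q ^ ℓ * r ^ ℓ) := by
            calc V ℓ ≤ Cc * ((M : ℝ) ^ (-(ℓ : ℝ))) ^ β := hV ℓ
              _ = Cc * (q ^ ℓ * r ^ ℓ) := by
                  rw [hconv ℓ β, hqr, mul_pow]
          calc V ℓ / (N ℓ : ℝ) ≤ Cc * (q ^ ℓ * r ^ ℓ) / x ℓ := by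
                apply div_le_div₀ (by positivity) hVl (hx0 ℓ) (hNlb ℓ)
            _ = Cc * ε ^ 2 * r ^ ℓ := by
                rw [hx_def]
                simp only
                rw [← heinv]
                field_simp
      _ = Cc * ε ^ 2 * ∑ ℓ ∈ range (L + 1), r ^ ℓ := by rw [Finset.mul_sum]
      _ ≤ Cc * ε ^ 2 * K := by
          apply mul_le_mul_of_nonneg_left (hgeom _) (by positivity)
      _ = Cc * K * ε ^ 2 := by ring
      _ ≤ C' * ε ^ 2 := by
          apply mul_le_mul_of_nonneg_right _ (by positivity)
          have h1 : 0 < Cc * (K + s ^ 2 / (s - 1)) := by positivity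
          have h3 : 0 < Cc ^ 2 := by positivity
          rw [hC'_def]; linarith
  · -- bias bound
    have hb : |bias L| ≤ Cc * ε := by
      calc |bias L| ≤ Cc * ((M : ℝ) ^ (-(L : ℝ))) ^ α := hbias L
        _ ≤ Cc * ε := by
            apply mul_le_mul_of_nonneg_left _ hCc.le
            have h1 : ((M : ℝ) ^ (-(L : ℝ))) ^ α = ((M : ℝ) ^ (L : ℝ)) ^ (-α) := by
              rw [← Real.rpow_mul hM0.le, ← Real.rpow_mul hM0.le]
              congr 1
              ring
            rw [h1]
            calc ((M : ℝ) ^ (L : ℝ)) ^ (-α) ≤ y ^ (-α) :=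
                  Real.rpow_le_rpow_of_nonpos hy0 hL1 (by linarith)
              _ = ε := by
                  rw [hy_def, ← Real.rpow_mul hε.le]
                  rw [show (-α⁻¹ : ℝ) * (-α) = 1 by field_simp]
                  exact Real.rpow_one ε
    calc bias L ^ 2 = |bias L| ^ 2 := (sq_abs _).symm
      _ ≤ (Cc * ε) ^ 2 := pow_le_pow_left₀ (abs_nonneg _) hb 2
      _ = Cc ^ 2 * ε ^ 2 := by ring
      _ ≤ C' * ε ^ 2 := by
          apply mul_le_mul_of_nonneg_right _ (by positivity)
          have h1 : 0 < Cc * (K + s ^ 2 / (s - 1)) := by positivity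
          have h2 : 0 < Cc * K := by positivity
          rw [hC'_def]; linarith
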